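/- Let z, w > 0 be reals such that the family of Boltzmann weights of all labelled DAGs (over all vertex counts n ≥ 0) is summable. Then for every natural number k, the sum of the Boltzmann weights of all labelled DAGs having exactly k sources, divided by the sum of the Boltzmann weights of all labelled DAGs, equals (z^k / ((1+w)^{k(k−1)/2} k!)) · Set(−(1+w)^{−k} z, w). -/

import Mathlib

/-- A finite labelled digraph (edge set on `Fin n`) is acyclic if the transitive
closure of its edge relation is irreflexive. -/
def DAcyclic {n : ℕ} (E : Finset (Fin n × Fin n)) : Prop :=
  Irreflexive (Relation.TransGen fun a b => (a, b) ∈ E)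

/-- Sources of a digraph: vertices with no incoming edge. -/
def dagSources {n : ℕ} (E : Finset (Fin n × Fin n)) : Finset (Fin n) :=
  Finset.univ.filter fun v => ∀ u, (u, v) ∉ E

/-- The type of all labelled DAGs (of all sizes `n ≥ 0`). -/
def LDAG : Type := Σ n : ℕ, {E : Finset (Fin n × Fin n) // DAcyclic E}

/-- Boltzmann weight `z^{v(G)} w^{e(G)} / ((1+w)^{v(G)(v(G)-1)/2} v(G)!)` of a
labelled DAG. -/
noncomputable def bweight (z w : ℝ) (G : LDAG) : ℝ :=
  z ^ G.1 * w ^ (G.2 : Finset (Fin G.1 × Fin G.1)).card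
    / ((1 + w) ^ G.1.choose 2 * G.1.factorial)

/-- `Set(z,w) = Σ_{n ≥ 0} z^n / ((1+w)^{n(n-1)/2} n!)`. -/
noncomputable def SetGF (z w : ℝ) : ℝ :=
  ∑' n : ℕ, z ^ n / ((1 + w) ^ n.choose 2 * n.factorial)

open Finset

noncomputable section BoltzmannAux

open Classical in
/-- The finset of all DAG edge-sets on `Fin n`. -/
def DAGset (n : ℕ) : Finset (Finset (Fin n × Fin n)) :=
  univ.filter DAcyclic

/-- Weighted count of DAGs on `n` vertices. -/
def Aw (w : ℝ) (n : ℕ) : ℝ := ∑ E ∈ DAGset n, w ^ E.card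

lemma choose_two_add (a b : ℕ) :
    (a + b).choose 2 = a.choose 2 + a * b + b.choose 2 := by
  induction b with
  | zero => simp
  | succ b ih =>
    have h1 : a + (b + 1) = (a + b) + 1 := by omega
    have h2 : ∀ m : ℕ, (m + 1).choose 2 = m.choose 2 + m := by
      intro m
      rw [Nat.choose_succ_succ]
      simp [Nat.choose_one_right, Nat.add_comm]
    rw [h1, h2, ih, h2]
    ring

lemma transGen_map {m n : ℕ} (ι : Fin m ↪ Fin n) (F : Finset (Fin m × Fin m))
    {a b : Fin n}
    (h : Relation.TransGen (fun a b => (a, b) ∈ F.map (ι.prodMap ι)) a b) :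
    ∃ x y, a = ι x ∧ b = ι y ∧ Relation.TransGen (fun x y => (x, y) ∈ F) x y := by
  induction h with
  | single h =>
    rcases Finset.mem_map.1 h with ⟨p, hp, hpe⟩
    obtain ⟨h1, h2⟩ := Prod.mk.injEq .. ▸ hpe
    exact ⟨p.1, p.2, h1.symm, h2.symm, Relation.TransGen.single (by simpa using hp)⟩
  | tail _ hbc ih =>
    rcases ih with ⟨x, y, hax, hby, htg⟩
    rcases Finset.mem_map.1 hbc with ⟨p, hp, hpe⟩
    obtain ⟨h1, h2⟩ := Prod.mk.injEq .. ▸ hpe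
    have hp1 : p.1 = y := ι.injective (by rw [h1, ← hby])
    refine ⟨x, p.2, hax, h2.symm, htg.tail ?_⟩
    rw [← hp1]; simpa using hp

lemma dacyclic_map_union {n m : ℕ} (S : Finset (Fin n)) (ι : Fin m ↪ Fin n)
    (hι : ∀ x, ι x ∉ S) (C : Finset (Fin n × Fin n)) (hC : C ⊆ S ×ˢ Sᶜ)
    (F : Finset (Fin m × Fin m)) (hF : DAcyclic F) :
    DAcyclic (C ∪ F.map (ι.prodMap ι)) := by
  intro a ha
  set R : Fin n → Fin n → Prop := fun a b => (a, b) ∈ C ∪ F.map (ι.prodMap ι) with hR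
  have key : ∀ a b : Fin n, Relation.TransGen R a b →
      b ∉ S ∧ (a ∉ S →
        Relation.TransGen (fun a b => (a, b) ∈ F.map (ι.prodMap ι)) a b) := by
    intro a b h
    induction h with
    | single h =>
      rcases Finset.mem_union.1 h with h' | h'
      · have := hC h'
        rw [Finset.mem_product] at this
        exact ⟨by simpa using this.2, fun ha => absurd this.1 ha⟩
      · rcases Finset.mem_map.1 h' with ⟨p, hp, hpe⟩
        obtain ⟨h1, h2⟩ := Prod.mk.injEq .. ▸ hpe
        exact ⟨h2 ▸ hι p.2, fun _ => Relation.TransGen.single h'⟩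
    | tail hab hbc ih =>
      rcases ih with ⟨hbS, hih⟩
      rcases Finset.mem_union.1 hbc with h' | h'
      · have := hC h'
        rw [Finset.mem_product] at this
        exact absurd this.1 hbS
      · rcases Finset.mem_map.1 h' with ⟨p, hp, hpe⟩
        obtain ⟨h1, h2⟩ := Prod.mk.injEq .. ▸ hpe
        exact ⟨h2 ▸ hι p.2, fun haS => (hih haS).tail h'⟩
    -- done
  rcases key a a ha with ⟨haS, hmap⟩
  rcases transGen_map ι F (hmap haS) with ⟨x, y, hx, hy, htg⟩
  have : x = y := ι.injective (by rw [← hx, ← hy])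
  exact hF x (this ▸ htg)

/-- Sum of `w^card` over subsets of a finset is `(1+w)^card`. -/
lemma sum_powerset_pow_card {α : Type*} (X : Finset α) (w : ℝ) :
    ∑ C ∈ X.powerset, w ^ C.card = (1 + w) ^ X.card := by
  classical
  have := Finset.prod_add (fun _ : α => w) (fun _ : α => 1) X
  simp only [Finset.prod_const, Finset.prod_const_one, mul_one, one_pow] at this
  rw [add_comm 1 w, ← this]

/-- Key bijection: DAGs on `Fin n` with no edge into `S` correspond to a subset of
the cross edges `S ×ˢ Sᶜ` together with a DAG on the complement of `S`. -/
lemma sum_noIn (w : ℝ) {n : ℕ} (S : Finset (Fin n)) :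
    ∑ E ∈ (DAGset n).filter (fun E => ∀ p ∈ E, p.2 ∉ S), w ^ E.card
      = (1 + w) ^ (S.card * (n - S.card)) * Aw w (n - S.card) := by
  classical
  have hm : (Sᶜ : Finset (Fin n)).card = n - S.card := by
    rw [Finset.card_compl, Fintype.card_fin]
  set m := n - S.card with hmdef
  set ι : Fin m ↪o Fin n := Sᶜ.orderEmbOfFin hm with hι
  have hιmem : ∀ x : Fin m, ι x ∈ Sᶜ := fun x => Sᶜ.orderEmbOfFin_mem hm x
  have hιnotS : ∀ x : Fin m, ι x ∉ S := fun x => by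
    have := hιmem x; rwa [Finset.mem_compl] at this
  set emb : Fin m × Fin m ↪ Fin n × Fin n :=
    (ι.toEmbedding).prodMap (ι.toEmbedding) with hemb
  have hrange : Set.range emb = {p : Fin n × Fin n | p.1 ∈ Sᶜ ∧ p.2 ∈ Sᶜ} := by
    rw [hemb]
    have : Set.range (ι : Fin m → Fin n) = ↑(Sᶜ) := Sᶜ.range_orderEmbOfFin hm
    ext p
    simp only [Function.Embedding.prodMap, Function.Embedding.coeFn_mk, Set.mem_range,
      Set.mem_setOf_eq, Prod.exists]
    constructor
    · rintro ⟨x, y, h⟩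
      rw [Prod.map] at h
      obtain ⟨h1, h2⟩ := Prod.mk.injEq .. ▸ h
      constructor
      · rw [← h1]; exact hιmem x
      · rw [← h2]; exact hιmem y
    · rintro ⟨h1, h2⟩
      have e1 : p.1 ∈ Set.range (ι : Fin m → Fin n) := by rw [this]; exact_mod_cast h1
      have e2 : p.2 ∈ Set.range (ι : Fin m → Fin n) := by rw [this]; exact_mod_cast h2
      rcases e1 with ⟨x, hx⟩; rcases e2 with ⟨y, hy⟩
      exact ⟨x, y, by simp [Prod.map, hx, hy]⟩
  -- the sum over pairs
  have main :
      ∑ E ∈ (DAGset n).filter (fun E => ∀ p ∈ E, p.2 ∉ S), w ^ E.card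
        = ∑ P ∈ (S ×ˢ Sᶜ).powerset ×ˢ DAGset m, w ^ (P.1.card + P.2.card) := by
    refine Finset.sum_nbij'
      (i := fun E => (E.filter (fun p => p.1 ∈ S),
        (E.filter (fun p => p.1 ∉ S)).preimage emb emb.injective.injOn))
      (j := fun P => P.1 ∪ P.2.map emb) ?_ ?_ ?_ ?_ ?_
    · -- maps into product
      intro E hE
      rw [Finset.mem_filter] at hE
      obtain ⟨hEdag, hEno⟩ := hE
      rw [DAGset, Finset.mem_filter] at hEdag
      rw [Finset.mem_product]
      constructor
      · rw [Finset.mem_powerset]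
        intro p hp
        rw [Finset.mem_filter] at hp
        rw [Finset.mem_product]
        exact ⟨hp.2, Finset.mem_compl.2 (hEno p hp.1)⟩
      · rw [DAGset, Finset.mem_filter]
        refine ⟨Finset.mem_univ _, ?_⟩
        intro x hx
        have : Relation.TransGen (fun a b : Fin n => (a, b) ∈ E) (ι x) (ι x) := by
          refine Relation.TransGen.lift (fun y : Fin m => ι y) ?_ _ _ hx
          intro a b hab
          rw [Finset.mem_preimage, Finset.mem_filter] at hab
          exact hab.1
        exact hEdag.2 (ι x) this
    · -- j maps into filter set
      intro P hP
      rw [Finset.mem_product] at hP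
      obtain ⟨hC, hF⟩ := hP
      rw [Finset.mem_powerset] at hC
      rw [DAGset, Finset.mem_filter] at hF
      rw [Finset.mem_filter, DAGset, Finset.mem_filter]
      refine ⟨⟨Finset.mem_univ _, ?_⟩, ?_⟩
      · exact dacyclic_map_union S ι.toEmbedding hιnotS P.1 hC P.2 hF.2
      · intro p hp
        rcases Finset.mem_union.1 hp with h' | h'
        · have := hC h'
          rw [Finset.mem_product] at this
          exact Finset.mem_compl.1 this.2
        · rcases Finset.mem_map.1 h' with ⟨q, hq, hqe⟩
          obtain ⟨h1, h2⟩ := Prod.mk.injEq .. ▸ hqe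
          exact h2 ▸ hιnotS q.2
    · -- left inverse
      intro E hE
      rw [Finset.mem_filter] at hE
      obtain ⟨_, hEno⟩ := hE
      have key : ((E.filter (fun p => p.1 ∉ S)).preimage emb emb.injective.injOn).map emb
          = E.filter (fun p => p.1 ∉ S) := by
        rw [Finset.map_eq_image, Finset.image_preimage]
        refine Finset.filter_true_of_mem ?_
        intro p hp
        rw [Finset.mem_filter] at hp
        rw [hrange]
        exact ⟨Finset.mem_compl.2 hp.2, Finset.mem_compl.2 (hEno p hp.1)⟩
      simp only [key]
      exact Finset.filter_union_filter_not_eq _ E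
    · -- right inverse
      intro P hP
      rw [Finset.mem_product] at hP
      obtain ⟨hC, _⟩ := hP
      rw [Finset.mem_powerset] at hC
      have h1 : (P.1 ∪ P.2.map emb).filter (fun p => p.1 ∈ S) = P.1 := by
        ext p
        rw [Finset.mem_filter, Finset.mem_union]
        constructor
        · rintro ⟨h' | h', hpS⟩
          · exact h'
          · rcases Finset.mem_map.1 h' with ⟨q, hq, hqe⟩
            obtain ⟨hq1, _⟩ := Prod.mk.injEq .. ▸ hqe
            exact absurd (hq1 ▸ hpS) (hιnotS q.1)
        · intro h'
          have := hC h'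
          rw [Finset.mem_product] at this
          exact ⟨Or.inl h', this.1⟩
      have h2 : (P.1 ∪ P.2.map emb).filter (fun p => p.1 ∉ S) = P.2.map emb := by
        ext p
        rw [Finset.mem_filter, Finset.mem_union]
        constructor
        · rintro ⟨h' | h', hpS⟩
          · have := hC h'
            rw [Finset.mem_product] at this
            exact absurd this.1 hpS
          · exact h'
        · intro h'
          rcases Finset.mem_map.1 h' with ⟨q, hq, hqe⟩
          obtain ⟨hq1, _⟩ := Prod.mk.injEq .. ▸ hqe
          exact ⟨Or.inr h', hq1 ▸ hιnotS q.1⟩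
      refine Prod.ext ?_ ?_
      · simpa using h1
      · simp only [h2]
        exact Finset.preimage_map emb P.2
    · -- weights agree
      intro E hE
      rw [Finset.mem_filter] at hE
      obtain ⟨_, hEno⟩ := hE
      congr 1
      have key : ((E.filter (fun p => p.1 ∉ S)).preimage emb emb.injective.injOn).card
          = (E.filter (fun p => p.1 ∉ S)).card := by
        rw [← Finset.card_map emb, Finset.map_eq_image, Finset.image_preimage]
        congr 1
        refine Finset.filter_true_of_mem ?_
        intro p hp
        rw [Finset.mem_filter] at hp
        rw [hrange]
        exact ⟨Finset.mem_compl.2 hp.2, Finset.mem_compl.2 (hEno p hp.1)⟩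
      simp only [key]
      exact (Finset.card_filter_add_card_filter_not (fun p : Fin n × Fin n => p.1 ∈ S)).symm
  rw [main]
  rw [Finset.sum_product]
  simp only [pow_add]
  rw [← Finset.sum_mul_sum]
  rw [sum_powerset_pow_card, Finset.card_product, hm]
  rfl

/-- `S` consists of sources of `E` iff no edge of `E` points into `S`. -/
lemma subset_sources_iff {n : ℕ} (S : Finset (Fin n)) (E : Finset (Fin n × Fin n)) :
    S ⊆ dagSources E ↔ ∀ p ∈ E, p.2 ∉ S := by
  constructor
  · intro h p hp hpS
    have := h hpS
    rw [dagSources, Finset.mem_filter] at this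
    exact this.2 p.1 (by simpa using hp)
  · intro h v hv
    rw [dagSources, Finset.mem_filter]
    exact ⟨Finset.mem_univ _, fun u hu => h (u, v) hu hv⟩

/-- Alternating sum of signs over an interval of the subset lattice. -/
lemma sum_signs {n : ℕ} (S U : Finset (Fin n)) (hSU : S ⊆ U) :
    ∑ T ∈ univ.filter (fun T => S ⊆ T ∧ T ⊆ U), (-1 : ℝ) ^ (T.card - S.card)
      = if U = S then 1 else 0 := by
  classical
  have key : ∑ T ∈ univ.filter (fun T => S ⊆ T ∧ T ⊆ U), (-1 : ℝ) ^ (T.card - S.card)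
      = ∑ t ∈ (U \ S).powerset, (-1 : ℝ) ^ t.card := by
    refine Finset.sum_nbij' (i := fun T => T \ S) (j := fun t => t ∪ S) ?_ ?_ ?_ ?_ ?_
    · intro T hT
      rw [Finset.mem_filter] at hT
      rw [Finset.mem_powerset]
      exact Finset.sdiff_subset_sdiff hT.2.2 le_rfl
    · intro t ht
      rw [Finset.mem_powerset] at ht
      rw [Finset.mem_filter]
      refine ⟨Finset.mem_univ _, Finset.subset_union_right, ?_⟩
      exact Finset.union_subset (ht.trans (Finset.sdiff_subset)) hSU
    · intro T hT
      rw [Finset.mem_filter] at hT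
      exact Finset.sdiff_union_of_subset hT.2.1
    · intro t ht
      rw [Finset.mem_powerset] at ht
      refine Finset.union_sdiff_cancel_right ?_
      exact Finset.disjoint_of_subset_left ht Finset.sdiff_disjoint
    · intro T hT
      rw [Finset.mem_filter] at hT
      rw [Finset.card_sdiff_of_subset hT.2.1]
  have cast_key : ∑ t ∈ (U \ S).powerset, (-1 : ℝ) ^ t.card
      = if U \ S = ∅ then 1 else 0 := by
    have h := Finset.sum_powerset_neg_one_pow_card (x := U \ S)
    have h2 : ((∑ m ∈ (U \ S).powerset, (-1 : ℤ) ^ m.card : ℤ) : ℝ)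
        = ∑ t ∈ (U \ S).powerset, (-1 : ℝ) ^ t.card := by push_cast; rfl
    rw [← h2, h]
    split_ifs <;> simp
  rw [key, cast_key]
  have hiff : U \ S = ∅ ↔ U = S := by
    rw [Finset.sdiff_eq_empty_iff_subset]
    exact ⟨fun h => Finset.Subset.antisymm h hSU, fun h => h.le⟩
  simp [hiff]

/-- Möbius inversion on the subset lattice. -/
lemma mobius_inversion {n : ℕ} (f g : Finset (Fin n) → ℝ)
    (hfg : ∀ S, f S = ∑ T ∈ univ.filter (fun T => S ⊆ T), g T) (S : Finset (Fin n)) :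
    g S = ∑ T ∈ univ.filter (fun T => S ⊆ T), (-1 : ℝ) ^ (T.card - S.card) * f T := by
  classical
  have swap :
      ∑ T ∈ univ.filter (fun T => S ⊆ T), ∑ U ∈ univ.filter (fun U => T ⊆ U),
          (-1 : ℝ) ^ (T.card - S.card) * g U
        = ∑ U ∈ univ.filter (fun U => S ⊆ U),
            ∑ T ∈ univ.filter (fun T => S ⊆ T ∧ T ⊆ U),
              (-1 : ℝ) ^ (T.card - S.card) * g U := by
    refine Finset.sum_comm' ?_
    intro T U
    simp only [Finset.mem_filter, Finset.mem_univ, true_and]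
    constructor
    · rintro ⟨h1, h2⟩; exact ⟨⟨h1, h2⟩, h1.trans h2⟩
    · rintro ⟨⟨h1, h2⟩, _⟩; exact ⟨h1, h2⟩
  calc g S
      = ∑ U ∈ univ.filter (fun U => S ⊆ U), (if U = S then 1 else 0) * g U := by
        symm
        simp only [ite_mul, one_mul, zero_mul, Finset.sum_ite_eq']
        rw [if_pos]
        rw [Finset.mem_filter]
        exact ⟨Finset.mem_univ _, Finset.Subset.refl S⟩
    _ = ∑ U ∈ univ.filter (fun U => S ⊆ U),
          (∑ T ∈ univ.filter (fun T => S ⊆ T ∧ T ⊆ U),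
            (-1 : ℝ) ^ (T.card - S.card)) * g U := by
        refine Finset.sum_congr rfl ?_
        intro U hU
        rw [Finset.mem_filter] at hU
        rw [sum_signs S U hU.2]
    _ = ∑ T ∈ univ.filter (fun T => S ⊆ T), (-1 : ℝ) ^ (T.card - S.card) * f T := by
        simp only [Finset.sum_mul]
        rw [← swap]
        refine Finset.sum_congr rfl ?_
        intro T _
        rw [hfg T, Finset.mul_sum]

/-- The weighted count of DAGs on `n` vertices with exactly `k` sources, via
inclusion-exclusion. -/
lemma count_sources (w : ℝ) (n k : ℕ) :
    ∑ E ∈ (DAGset n).filter (fun E => (dagSources E).card = k), w ^ E.card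
      = ∑ t ∈ range (n + 1), (-1 : ℝ) ^ (t - k) * ((n.choose t * t.choose k : ℕ) : ℝ)
          * (1 + w) ^ (t * (n - t)) * Aw w (n - t) := by
  classical
  set g : Finset (Fin n) → ℝ :=
    fun S => ∑ E ∈ (DAGset n).filter (fun E => dagSources E = S), w ^ E.card with hg
  set f : Finset (Fin n) → ℝ :=
    fun S => ∑ E ∈ (DAGset n).filter (fun E => S ⊆ dagSources E), w ^ E.card with hf
  have hfg : ∀ S, f S = ∑ T ∈ univ.filter (fun T => S ⊆ T), g T := by
    intro S
    rw [hf, hg]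
    simp only
    rw [← Finset.sum_fiberwise_of_maps_to
      (g := dagSources) (t := univ.filter (fun T => S ⊆ T))
      (fun E hE => by
        rw [Finset.mem_filter] at hE ⊢
        exact ⟨Finset.mem_univ _, hE.2⟩) (fun E => w ^ E.card)]
    refine Finset.sum_congr rfl ?_
    intro T hT
    rw [Finset.mem_filter] at hT
    congr 1
    rw [Finset.filter_filter]
    refine Finset.filter_congr ?_
    intro E _
    constructor
    · rintro ⟨_, h2⟩; exact h2
    · intro h; exact ⟨h ▸ hT.2, h⟩
  have hfval : ∀ T : Finset (Fin n),
      f T = (1 + w) ^ (T.card * (n - T.card)) * Aw w (n - T.card) := by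
    intro T
    rw [hf]
    simp only
    rw [← sum_noIn w T]
    congr 1
    refine Finset.filter_congr ?_
    intro E _
    exact subset_sources_iff T E
  -- group LHS by the source set
  have step1 :
      ∑ E ∈ (DAGset n).filter (fun E => (dagSources E).card = k), w ^ E.card
        = ∑ S ∈ univ.filter (fun S : Finset (Fin n) => S.card = k), g S := by
    rw [hg]
    simp only
    rw [← Finset.sum_fiberwise_of_maps_to
      (g := dagSources) (t := univ.filter (fun S : Finset (Fin n) => S.card = k))
      (fun E hE => by
        rw [Finset.mem_filter] at hE ⊢
        exact ⟨Finset.mem_univ _, hE.2⟩) (fun E => w ^ E.card)]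
    refine Finset.sum_congr rfl ?_
    intro S hS
    rw [Finset.mem_filter] at hS
    congr 1
    rw [Finset.filter_filter]
    refine Finset.filter_congr ?_
    intro E _
    constructor
    · rintro ⟨_, h2⟩; exact h2
    · intro h; exact ⟨h ▸ hS.2, h⟩
  rw [step1]
  have step2 :
      ∑ S ∈ univ.filter (fun S : Finset (Fin n) => S.card = k), g S
        = ∑ S ∈ univ.filter (fun S : Finset (Fin n) => S.card = k),
            ∑ T ∈ univ.filter (fun T => S ⊆ T),
              (-1 : ℝ) ^ (T.card - k) * f T := by
    refine Finset.sum_congr rfl ?_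
    intro S hS
    rw [Finset.mem_filter] at hS
    rw [mobius_inversion f g hfg S, hS.2]
  rw [step2]
  have step3 :
      ∑ S ∈ univ.filter (fun S : Finset (Fin n) => S.card = k),
          ∑ T ∈ univ.filter (fun T => S ⊆ T), (-1 : ℝ) ^ (T.card - k) * f T
        = ∑ T ∈ (univ : Finset (Finset (Fin n))),
            ((T.card.choose k : ℕ) : ℝ) * ((-1 : ℝ) ^ (T.card - k) * f T) := by
    rw [Finset.sum_comm'
      (s := univ.filter (fun S : Finset (Fin n) => S.card = k))
      (t := fun S => univ.filter (fun T => S ⊆ T))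
      (t' := (univ : Finset (Finset (Fin n))))
      (s' := fun T => univ.filter (fun S => S.card = k ∧ S ⊆ T))
      (by
        intro S T
        simp only [Finset.mem_filter, Finset.mem_univ, true_and]
        constructor
        · rintro ⟨h1, h2⟩; exact ⟨⟨h1, h2⟩, trivial⟩
        · rintro ⟨⟨h1, h2⟩, _⟩; exact ⟨h1, h2⟩)]
    refine Finset.sum_congr rfl ?_
    intro T _
    rw [Finset.sum_const]
    have : univ.filter (fun S : Finset (Fin n) => S.card = k ∧ S ⊆ T)
        = T.powersetCard k := by
      ext S
      rw [Finset.mem_filter, Finset.mem_powersetCard]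
      constructor
      · rintro ⟨_, h1, h2⟩; exact ⟨h2, h1⟩
      · rintro ⟨h1, h2⟩; exact ⟨Finset.mem_univ _, h2, h1⟩
    rw [this, Finset.card_powersetCard, nsmul_eq_mul]
  rw [step3]
  -- group by cardinality of T
  rw [← Finset.sum_fiberwise_of_maps_to
    (g := fun T : Finset (Fin n) => T.card) (t := range (n + 1))
    (fun T _ => by
      rw [Finset.mem_range]
      exact Nat.lt_succ_of_le (by simpa using Finset.card_le_univ T))
    (fun T => ((T.card.choose k : ℕ) : ℝ) * ((-1 : ℝ) ^ (T.card - k) * f T))]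
  refine Finset.sum_congr rfl ?_
  intro t ht
  have hcardt : (univ.filter (fun T : Finset (Fin n) => T.card = t)).card
      = n.choose t := by
    have : univ.filter (fun T : Finset (Fin n) => T.card = t)
        = (univ : Finset (Fin n)).powersetCard t := by
      ext T
      rw [Finset.mem_filter, Finset.mem_powersetCard]
      constructor
      · rintro ⟨_, h⟩; exact ⟨Finset.subset_univ _, h⟩
      · rintro ⟨_, h⟩; exact ⟨Finset.mem_univ _, h⟩
    rw [this, Finset.card_powersetCard, Finset.card_univ, Fintype.card_fin]
  have : ∀ T ∈ univ.filter (fun T : Finset (Fin n) => T.card = t),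
      ((T.card.choose k : ℕ) : ℝ) * ((-1 : ℝ) ^ (T.card - k) * f T)
        = ((t.choose k : ℕ) : ℝ) * ((-1 : ℝ) ^ (t - k)
            * ((1 + w) ^ (t * (n - t)) * Aw w (n - t))) := by
    intro T hT
    rw [Finset.mem_filter] at hT
    rw [hfval T, hT.2]
  rw [Finset.sum_congr rfl this, Finset.sum_const, hcardt, nsmul_eq_mul]
  push_cast
  ring

/-- The key algebraic identity between weights of the convolution terms. -/
lemma term_eq (z w : ℝ) (h1w : (0:ℝ) < 1 + w) (k j p : ℕ) :
    ((-1 : ℝ) ^ j * (((k + j + p).choose (k + j) * (k + j).choose k : ℕ) : ℝ)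
        * (1 + w) ^ ((k + j) * p) * Aw w p)
      * (z ^ (k + j + p) / ((1 + w) ^ ((k + j + p).choose 2) * (k + j + p).factorial))
    = (z ^ k / ((1 + w) ^ k.choose 2 * k.factorial))
      * (((-(z / (1 + w) ^ k)) ^ j / ((1 + w) ^ j.choose 2 * j.factorial))
        * (Aw w p * z ^ p / ((1 + w) ^ p.choose 2 * p.factorial))) := by
  have hw0 : (1 + w) ≠ 0 := ne_of_gt h1w
  have hch : (k + j + p).choose 2
      = k.choose 2 + j.choose 2 + p.choose 2 + k * j + (k + j) * p := by
    rw [choose_two_add (k + j) p, choose_two_add k j]; ring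
  have hfac : ((k + j + p).factorial : ℝ)
      = (((k + j + p).choose (k + j) : ℕ) : ℝ) * (((k + j).choose k : ℕ) : ℝ)
        * ((k.factorial : ℝ) * (j.factorial : ℝ) * (p.factorial : ℝ)) := by
    have h1 : (k + j + p).choose (k + j) * (k + j).factorial * p.factorial
        = (k + j + p).factorial := by
      have := Nat.choose_mul_factorial_mul_factorial (Nat.le_add_right (k + j) p)
      simpa using this
    have h2 : (k + j).choose k * k.factorial * j.factorial = (k + j).factorial := by
      have := Nat.choose_mul_factorial_mul_factorial (Nat.le_add_right k j)
      simpa using this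
    rw [← h1, ← h2]
    push_cast
    ring
  have hneg : (-(z / (1 + w) ^ k)) ^ j = (-1) ^ j * z ^ j / (1 + w) ^ (k * j) := by
    rw [neg_pow, div_pow, ← pow_mul]
    ring
  have e1 : z ^ (k + j + p) = z ^ k * z ^ j * z ^ p := by rw [pow_add, pow_add]
  have e2 : (1 + w) ^ (k.choose 2 + j.choose 2 + p.choose 2 + k * j + (k + j) * p)
      = (1 + w) ^ k.choose 2 * (1 + w) ^ j.choose 2 * (1 + w) ^ p.choose 2
        * (1 + w) ^ (k * j) * (1 + w) ^ ((k + j) * p) := by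
    rw [pow_add, pow_add, pow_add, pow_add]
  rw [hneg, hch, hfac, e1, e2]
  have n1 : ((k.factorial : ℕ) : ℝ) ≠ 0 := Nat.cast_ne_zero.2 k.factorial_ne_zero
  have n2 : ((j.factorial : ℕ) : ℝ) ≠ 0 := Nat.cast_ne_zero.2 j.factorial_ne_zero
  have n3 : ((p.factorial : ℕ) : ℝ) ≠ 0 := Nat.cast_ne_zero.2 p.factorial_ne_zero
  have m1 : (1 + w) ^ k.choose 2 ≠ 0 := pow_ne_zero _ hw0
  have m2 : (1 + w) ^ j.choose 2 ≠ 0 := pow_ne_zero _ hw0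
  have m3 : (1 + w) ^ p.choose 2 ≠ 0 := pow_ne_zero _ hw0
  have m4 : (1 + w) ^ (k * j) ≠ 0 := pow_ne_zero _ hw0
  have m5 : (1 + w) ^ ((k + j) * p) ≠ 0 := pow_ne_zero _ hw0
  have m6 : (1 + w) ^ k ≠ 0 := pow_ne_zero _ hw0
  have c1 : (((k + j + p).choose (k + j) : ℕ) : ℝ) ≠ 0 :=
    Nat.cast_ne_zero.2 (Nat.choose_pos (Nat.le_add_right (k + j) p)).ne'
  have c2 : (((k + j).choose k : ℕ) : ℝ) ≠ 0 :=
    Nat.cast_ne_zero.2 (Nat.choose_pos (Nat.le_add_right k j)).ne'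
  field_simp
  push_cast
  ring

/-- The summand for `n < k` sources vanishes. -/
lemma filter_sources_empty (n k : ℕ) (h : n < k) :
    (DAGset n).filter (fun E => (dagSources E).card = k) = ∅ := by
  refine Finset.filter_false_of_mem ?_
  intro E _
  have h1 : (dagSources E).card ≤ n := by
    have := Finset.card_le_univ (dagSources E)
    simpa [Finset.card_univ] using this
  omega

/-- Convolution form of the weighted count of DAGs with `k` sources. -/
lemma b2_conv (z w : ℝ) (h1w : (0:ℝ) < 1 + w) (k q : ℕ) :
    (∑ E ∈ (DAGset (k + q)).filter (fun E => (dagSources E).card = k), w ^ E.card)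
      * (z ^ (k + q) / ((1 + w) ^ (k + q).choose 2 * (k + q).factorial))
    = (z ^ k / ((1 + w) ^ k.choose 2 * k.factorial))
      * ∑ j ∈ range (q + 1),
          ((-(z / (1 + w) ^ k)) ^ j / ((1 + w) ^ j.choose 2 * j.factorial))
          * (Aw w (q - j) * z ^ (q - j)
              / ((1 + w) ^ (q - j).choose 2 * (q - j).factorial)) := by
  rw [count_sources w (k + q) k, Finset.sum_mul]
  conv_lhs => rw [Finset.range_eq_Ico]
  rw [← Finset.sum_Ico_consecutive _ (Nat.zero_le k) (by omega : k ≤ k + q + 1)]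
  have hzero : ∑ t ∈ Ico 0 k,
      ((-1:ℝ) ^ (t - k) * (((k + q).choose t * t.choose k : ℕ) : ℝ)
          * (1 + w) ^ (t * (k + q - t)) * Aw w (k + q - t))
        * (z ^ (k + q) / ((1 + w) ^ (k + q).choose 2 * (k + q).factorial)) = 0 := by
    refine Finset.sum_eq_zero ?_
    intro t ht
    rw [Finset.mem_Ico] at ht
    have hc : t.choose k = 0 := Nat.choose_eq_zero_of_lt ht.2
    rw [hc]
    push_cast
    ring
  rw [hzero, zero_add, Finset.sum_Ico_eq_sum_range]
  have hq1 : k + q + 1 - k = q + 1 := by omega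
  rw [hq1, Finset.mul_sum]
  refine Finset.sum_congr rfl ?_
  intro j hj
  rw [Finset.mem_range] at hj
  have hj' : k + j - k = j := by omega
  have hp : k + q - (k + j) = q - j := by omega
  have hn : k + q = k + j + (q - j) := by omega
  rw [hj', hp, hn]
  exact term_eq z w h1w k j (q - j)

/-- Reduction of a `tsum` over acyclic edge-sets to a finite filtered sum. -/
lemma dag_inner_sum (z w : ℝ) (n : ℕ) (P : Finset (Fin n × Fin n) → Prop)
    [DecidablePred P] :
    (∑' e : {E : Finset (Fin n × Fin n) // DAcyclic E},
        (if P e.val then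
          z ^ n * w ^ (e.val).card / ((1 + w) ^ n.choose 2 * n.factorial) else 0))
      = (∑ E ∈ (DAGset n).filter P, w ^ E.card)
          * (z ^ n / ((1 + w) ^ n.choose 2 * n.factorial)) := by
  classical
  rw [tsum_fintype]
  have h0 : (∑ e : {E : Finset (Fin n × Fin n) // DAcyclic E},
        (if P e.val then
          z ^ n * w ^ (e.val).card / ((1 + w) ^ n.choose 2 * n.factorial) else 0))
      = ∑ E ∈ DAGset n,
          (if P E then
            z ^ n * w ^ E.card / ((1 + w) ^ n.choose 2 * n.factorial) else 0) := by
    exact (Finset.sum_subtype (p := DAcyclic) (DAGset n)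
      (fun E => by simp [DAGset])
      (fun E => if P E then
        z ^ n * w ^ E.card / ((1 + w) ^ n.choose 2 * n.factorial) else 0)).symm
  rw [h0, ← Finset.sum_filter, Finset.sum_mul]
  refine Finset.sum_congr rfl ?_
  intro E _
  ring

/-- The unfiltered version of `dag_inner_sum`. -/
lemma dag_inner_sum' (z w : ℝ) (n : ℕ) :
    (∑' e : {E : Finset (Fin n × Fin n) // DAcyclic E},
        z ^ n * w ^ (e.val).card / ((1 + w) ^ n.choose 2 * n.factorial))
      = Aw w n * z ^ n / ((1 + w) ^ n.choose 2 * n.factorial) := by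
  classical
  rw [tsum_fintype]
  have h0 : (∑ e : {E : Finset (Fin n × Fin n) // DAcyclic E},
        z ^ n * w ^ (e.val).card / ((1 + w) ^ n.choose 2 * n.factorial))
      = ∑ E ∈ DAGset n, z ^ n * w ^ E.card / ((1 + w) ^ n.choose 2 * n.factorial) := by
    exact (Finset.sum_subtype (p := DAcyclic) (DAGset n)
      (fun E => by simp [DAGset])
      (fun E => z ^ n * w ^ E.card / ((1 + w) ^ n.choose 2 * n.factorial))).symm
  rw [h0, Aw, Finset.sum_mul, Finset.sum_div]
  refine Finset.sum_congr rfl ?_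
  intro E _
  ring

end BoltzmannAux

noncomputable instance (n : ℕ) : Fintype {E : Finset (Fin n × Fin n) // DAcyclic E} :=
  Fintype.ofFinite _

/-- Under the Boltzmann model, the probability that a random labelled
DAG has exactly $k$ sources equals
$\frac{z^k}{(1+w)^{\binom k2} k!} \mathrm{Set}(-(1+w)^{-k} z, w)$. -/
theorem boltzmann_sources_distribution (z w : ℝ) (hz : 0 < z) (hw : 0 < w)
    (hsum : Summable fun G : LDAG => bweight z w G) (k : ℕ) :
    (∑' G : {G : LDAG // (dagSources (G.2 : Finset (Fin G.1 × Fin G.1))).card = k},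
        bweight z w G.1)
      / (∑' G : LDAG, bweight z w G)
      = z ^ k / ((1 + w) ^ k.choose 2 * k.factorial) * SetGF (-(z / (1 + w) ^ k)) w := by
  classical
  have h1w : (0:ℝ) < 1 + w := by linarith
  have hAw_nonneg : ∀ p : ℕ, 0 ≤ Aw w p := by
    intro p
    refine Finset.sum_nonneg ?_
    intro E _
    positivity
  -- the fiberwise sum for the full model
  have hper : ∀ n : ℕ,
      (∑' e : {E : Finset (Fin n × Fin n) // DAcyclic E}, bweight z w ⟨n, e⟩)
        = Aw w n * z ^ n / ((1 + w) ^ n.choose 2 * n.factorial) := by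
    intro n
    have h1 : ∀ e : {E : Finset (Fin n × Fin n) // DAcyclic E},
        bweight z w ⟨n, e⟩
          = z ^ n * w ^ (e.val).card / ((1 + w) ^ n.choose 2 * n.factorial) := by
      intro e
      rfl
    rw [tsum_congr h1]
    exact dag_inner_sum' z w n
  have hD : (∑' G : LDAG, bweight z w G)
      = ∑' n : ℕ, Aw w n * z ^ n / ((1 + w) ^ n.choose 2 * n.factorial) := by
    rw [show (∑' G : LDAG, bweight z w G)
        = ∑' (n : ℕ) (e : {E : Finset (Fin n × Fin n) // DAcyclic E}),
            bweight z w ⟨n, e⟩ from Summable.tsum_sigma hsum]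
    exact tsum_congr hper
  have hvsum : Summable
      (fun n : ℕ => Aw w n * z ^ n / ((1 + w) ^ n.choose 2 * n.factorial)) := by
    exact (hsum.sigma).congr hper
  have hvnonneg : ∀ p : ℕ,
      0 ≤ Aw w p * z ^ p / ((1 + w) ^ p.choose 2 * p.factorial) := by
    intro p
    have h1 : (0:ℝ) ≤ Aw w p * z ^ p :=
      mul_nonneg (hAw_nonneg p) (pow_nonneg hz.le p)
    have h2 : (0:ℝ) ≤ (1 + w) ^ p.choose 2 * p.factorial := by positivity
    exact div_nonneg h1 h2
  -- the numerator
  set s : Set LDAG :=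
    {G : LDAG | (dagSources (G.2 : Finset (Fin G.1 × Fin G.1))).card = k} with hs
  have hNsub : (∑' G : {G : LDAG //
        (dagSources (G.2 : Finset (Fin G.1 × Fin G.1))).card = k}, bweight z w G.1)
      = ∑' G : LDAG, s.indicator (bweight z w) G := tsum_subtype s (bweight z w)
  have hindsum : Summable (s.indicator (bweight z w)) := hsum.indicator s
  have hNfib : ∀ n : ℕ,
      (∑' e : {E : Finset (Fin n × Fin n) // DAcyclic E},
          s.indicator (bweight z w) ⟨n, e⟩)
        = (∑ E ∈ (DAGset n).filter (fun E => (dagSources E).card = k), w ^ E.card)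
            * (z ^ n / ((1 + w) ^ n.choose 2 * n.factorial)) := by
    intro n
    have h1 : ∀ e : {E : Finset (Fin n × Fin n) // DAcyclic E},
        s.indicator (bweight z w) ⟨n, e⟩
          = if (dagSources e.val).card = k then
              z ^ n * w ^ (e.val).card / ((1 + w) ^ n.choose 2 * n.factorial) else 0 := by
      intro e
      unfold Set.indicator
      by_cases h : (dagSources e.val).card = k
      · rw [if_pos h]
        refine (if_pos (show (⟨n, e⟩ : LDAG) ∈ s from h)).trans ?_
        rfl
      · rw [if_neg h]
        exact if_neg (show (⟨n, e⟩ : LDAG) ∉ s from h)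
    rw [tsum_congr h1]
    exact dag_inner_sum z w n (fun E => (dagSources E).card = k)
  have hN : (∑' G : {G : LDAG //
        (dagSources (G.2 : Finset (Fin G.1 × Fin G.1))).card = k}, bweight z w G.1)
      = ∑' n : ℕ,
          (∑ E ∈ (DAGset n).filter (fun E => (dagSources E).card = k), w ^ E.card)
            * (z ^ n / ((1 + w) ^ n.choose 2 * n.factorial)) := by
    rw [hNsub,
      show (∑' G : LDAG, s.indicator (bweight z w) G)
        = ∑' (n : ℕ) (e : {E : Finset (Fin n × Fin n) // DAcyclic E}),
            s.indicator (bweight z w) ⟨n, e⟩ from Summable.tsum_sigma hindsum]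
    exact tsum_congr hNfib
  -- vanishing below k and shifting
  have hb2zero : ∀ n : ℕ, n < k →
      (∑ E ∈ (DAGset n).filter (fun E => (dagSources E).card = k), w ^ E.card)
        * (z ^ n / ((1 + w) ^ n.choose 2 * n.factorial)) = 0 := by
    intro n hn
    rw [filter_sources_empty n k hn]
    simp
  have hshift : (∑' n : ℕ,
        (∑ E ∈ (DAGset n).filter (fun E => (dagSources E).card = k), w ^ E.card)
          * (z ^ n / ((1 + w) ^ n.choose 2 * n.factorial)))
      = ∑' q : ℕ,
          (∑ E ∈ (DAGset (k + q)).filter (fun E => (dagSources E).card = k), w ^ E.card)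
            * (z ^ (k + q) / ((1 + w) ^ (k + q).choose 2 * (k + q).factorial)) := by
    symm
    refine Function.Injective.tsum_eq (g := fun q : ℕ => k + q)
      (f := fun n : ℕ =>
        (∑ E ∈ (DAGset n).filter (fun E => (dagSources E).card = k), w ^ E.card)
          * (z ^ n / ((1 + w) ^ n.choose 2 * n.factorial)))
      (add_right_injective k) ?_
    intro n hn
    rw [Function.mem_support] at hn
    rcases le_or_gt k n with h | h
    · exact ⟨n - k, show k + (n - k) = n by omega⟩
    · exact absurd (hb2zero n h) hn
  -- summability of the two series
  have husum : Summable (fun j : ℕ =>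
      ‖(-(z / (1 + w) ^ k)) ^ j / ((1 + w) ^ j.choose 2 * j.factorial)‖) := by
    refine Summable.of_nonneg_of_le (fun j => norm_nonneg _) ?_
      (Real.summable_pow_div_factorial |z / (1 + w) ^ k|)
    intro j
    rw [Real.norm_eq_abs, abs_div, abs_pow, abs_neg,
      abs_of_pos (show (0:ℝ) < (1 + w) ^ j.choose 2 * j.factorial by positivity)]
    refine div_le_div_of_nonneg_left (by positivity) (by positivity) ?_
    refine le_mul_of_one_le_left (by positivity) ?_
    exact one_le_pow₀ (by linarith)
  have hvnormsum : Summable (fun p : ℕ =>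
      ‖Aw w p * z ^ p / ((1 + w) ^ p.choose 2 * p.factorial)‖) :=
    hvsum.congr (fun p => (Real.norm_of_nonneg (hvnonneg p)).symm)
  have hcauchy := tsum_mul_tsum_eq_tsum_sum_range_of_summable_norm husum hvnormsum
  -- assemble the numerator
  have hNfinal : (∑' G : {G : LDAG //
        (dagSources (G.2 : Finset (Fin G.1 × Fin G.1))).card = k}, bweight z w G.1)
      = (z ^ k / ((1 + w) ^ k.choose 2 * k.factorial))
          * (SetGF (-(z / (1 + w) ^ k)) w
            * ∑' n : ℕ, Aw w n * z ^ n / ((1 + w) ^ n.choose 2 * n.factorial)) := by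
    rw [hN, hshift]
    have hc : ∀ q : ℕ,
        (∑ E ∈ (DAGset (k + q)).filter (fun E => (dagSources E).card = k), w ^ E.card)
          * (z ^ (k + q) / ((1 + w) ^ (k + q).choose 2 * (k + q).factorial))
        = (z ^ k / ((1 + w) ^ k.choose 2 * k.factorial))
            * ∑ j ∈ Finset.range (q + 1),
                ((-(z / (1 + w) ^ k)) ^ j / ((1 + w) ^ j.choose 2 * j.factorial))
                * (Aw w (q - j) * z ^ (q - j)
                    / ((1 + w) ^ (q - j).choose 2 * (q - j).factorial)) :=
      fun q => b2_conv z w h1w k q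
    rw [tsum_congr hc, tsum_mul_left]
    congr 1
    rw [← hcauchy]
    rfl
  rw [hNfinal, hD]
  -- positivity of the denominator
  have hAw0 : Aw w 0 = 1 := by
    have hall : ∀ E : Finset (Fin 0 × Fin 0), DAcyclic E := by
      intro E a
      exact a.elim0
    have hDAG0 : DAGset 0 = (Finset.univ : Finset (Finset (Fin 0 × Fin 0))) := by
      rw [DAGset]
      exact Finset.filter_true_of_mem (fun E _ => hall E)
    have huniv : (Finset.univ : Finset (Finset (Fin 0 × Fin 0))) = {∅} := by
      ext E
      simp [Finset.eq_empty_of_isEmpty E,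
        (Finset.eq_empty_of_isEmpty (default : Finset (Fin 0 × Fin 0))).symm]
    rw [Aw, hDAG0, huniv]
    simp
  have hDpos : (0:ℝ) < ∑' n : ℕ,
      Aw w n * z ^ n / ((1 + w) ^ n.choose 2 * n.factorial) := by
    refine Summable.tsum_pos hvsum hvnonneg 0 ?_
    rw [show (0:ℕ).choose 2 = 0 from rfl]
    simp [hAw0]
  rw [mul_div_assoc, mul_div_cancel_right₀ _ (ne_of_gt hDpos)]
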